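/- Let n ≥ 2 be an integer and let H > (n-1)/n. Let C_H > 0 be the unique positive real with coth(C_H) = nH/(n-1), and set D_H := sinh^{n-1}(C_H) − nH·I_{n-1}(C_H). Then D_H > 0, and for every d with 0 < d < D_H there exist b, c with 0 < b < C_H < c such that M_{H,d} < 0 on [0, b), M_{H,d} > 0 on (b, c), and M_{H,d} < 0 on (c, ∞). -/

import Mathlib

open Filter Topology

/-- `Ifun m t = ∫₀ᵗ sinh^m(r) dr`. -/
noncomputable def Ifun (m : ℕ) (t : ℝ) : ℝ := ∫ r in (0:ℝ)..t, Real.sinh r ^ m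

/-- `Mfun n H d t = sinh^{n-1}(t) − nH·I_{n-1}(t) − d`. -/
noncomputable def Mfun (n : ℕ) (H d t : ℝ) : ℝ :=
  Real.sinh t ^ (n - 1) - n * H * Ifun (n - 1) t - d

/-- `Pfun n H d t = sinh^{n-1}(t) + nH·I_{n-1}(t) + d`. -/
noncomputable def Pfun (n : ℕ) (H d t : ℝ) : ℝ :=
  Real.sinh t ^ (n - 1) + n * H * Ifun (n - 1) t + d

/-- `Qfun n H d t = (nH·I_{n-1}(t) + d)/√(M·P)`. -/
noncomputable def Qfun (n : ℕ) (H d t : ℝ) : ℝ :=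
  (n * H * Ifun (n - 1) t + d) / Real.sqrt (Mfun n H d t * Pfun n H d t)

lemma Ifun_hasDerivAt (m : ℕ) (t : ℝ) : HasDerivAt (Ifun m) (Real.sinh t ^ m) t := by
  have hc : Continuous fun r : ℝ => Real.sinh r ^ m := Real.continuous_sinh.pow m
  exact intervalIntegral.integral_hasDerivAt_right (hc.intervalIntegrable _ _)
    (hc.stronglyMeasurableAtFilter _ _) hc.continuousAt

set_option maxHeartbeats 1000000 in
/-- Let `n ≥ 2` and `H > (n-1)/n`. Let `C_H > 0` be the unique positive real with
`coth(C_H) = nH/(n-1)` (i.e. `cosh C_H = (nH/(n-1))·sinh C_H`), and set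
`D_H := sinh^{n-1}(C_H) − nH·I_{n-1}(C_H)`. Then `D_H > 0`, and for every `d` with
`0 < d < D_H` there exist `b, c` with `0 < b < C_H < c` such that `M_{H,d} < 0` on `[0,b)`,
`M_{H,d} > 0` on `(b,c)`, and `M_{H,d} < 0` on `(c,∞)`. -/
theorem stmt15 (n : ℕ) (hn : 2 ≤ n) (H : ℝ) (hH : ((n : ℝ) - 1) / n < H)
    (C : ℝ) (hC : 0 < C)
    (hcoth : Real.cosh C = (n * H / ((n : ℝ) - 1)) * Real.sinh C) :
    0 < Real.sinh C ^ (n - 1) - n * H * Ifun (n - 1) C ∧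
    ∀ d : ℝ, 0 < d → d < Real.sinh C ^ (n - 1) - n * H * Ifun (n - 1) C →
      ∃ b c : ℝ, 0 < b ∧ b < C ∧ C < c ∧
        (∀ t, 0 ≤ t → t < b → Mfun n H d t < 0) ∧
        (∀ t, b < t → t < c → 0 < Mfun n H d t) ∧
        (∀ t, c < t → Mfun n H d t < 0) := by
  have hn0 : (0:ℝ) < n := by positivity
  have hn1R : (1:ℝ) ≤ (n:ℝ) - 1 := by
    have : (2:ℝ) ≤ n := by exact_mod_cast hn
    linarith
  have hnH : (n:ℝ) - 1 < n * H := by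
    rw [div_lt_iff₀ hn0] at hH; linarith
  have hHpos : 0 < H := by nlinarith
  set f : ℝ → ℝ := fun t => Real.sinh t ^ (n-1) - (n:ℝ) * H * Ifun (n-1) t with hf
  set φ : ℝ → ℝ := fun t => ((n:ℝ) - 1) * Real.cosh t - (n:ℝ) * H * Real.sinh t with hφ
  obtain ⟨k, hk⟩ : ∃ k, n - 1 = k + 1 := ⟨n - 2, by omega⟩
  have hcast : ((n - 1 : ℕ) : ℝ) = (n:ℝ) - 1 := by
    have h1 : (1:ℕ) ≤ n := by omega
    push_cast [Nat.cast_sub h1]; ring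
  -- derivative of f
  have hfderiv : ∀ t, HasDerivAt f (Real.sinh t ^ k * φ t) t := by
    intro t
    have h1 : HasDerivAt (fun t => Real.sinh t ^ (n-1))
        (((n-1:ℕ):ℝ) * Real.sinh t ^ (n-1-1) * Real.cosh t) t :=
      (Real.hasDerivAt_sinh t).pow (n-1)
    have h2 := (Ifun_hasDerivAt (n-1) t).const_mul ((n:ℝ) * H)
    have h3 := h1.sub h2
    refine h3.congr_deriv ?_
    rw [hcast]
    have hkk : n - 1 - 1 = k := by omega
    rw [hkk, hk, pow_succ]
    simp only [hφ]; ring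
  -- φ at C
  have hφC : φ C = 0 := by
    have hne : (n:ℝ) - 1 ≠ 0 := by linarith
    simp only [hφ]
    rw [hcoth]; field_simp
    ring
  -- φ strictly decreasing
  have hφanti : StrictAnti φ := by
    have hd : ∀ t, HasDerivAt φ (((n:ℝ)-1) * Real.sinh t - (n:ℝ) * H * Real.cosh t) t := fun t =>
      ((Real.hasDerivAt_cosh t).const_mul _).sub ((Real.hasDerivAt_sinh t).const_mul _)
    apply strictAnti_of_deriv_neg
    intro t
    rw [(hd t).deriv]
    rcases le_or_gt (Real.sinh t) 0 with h | h
    · have h2 := Real.cosh_pos (x := t)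
      nlinarith
    · have h2 : Real.sinh t < Real.cosh t := by
        have := Real.exp_pos (-t)
        have := Real.cosh_sub_sinh t
        linarith
      nlinarith
  have hφpos : ∀ t, t < C → 0 < φ t := fun t ht => hφC ▸ hφanti ht
  have hφneg : ∀ t, C < t → φ t < 0 := fun t ht => hφC ▸ hφanti ht
  have hfdiff : Differentiable ℝ f := fun t => (hfderiv t).differentiableAt
  have hfcont : Continuous f := hfdiff.continuous
  have hderiv_eq : ∀ t, deriv f t = Real.sinh t ^ k * φ t := fun t => (hfderiv t).deriv
  -- monotonicity
  have hmono : StrictMonoOn f (Set.Icc 0 C) := by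
    apply strictMonoOn_of_deriv_pos (convex_Icc 0 C) hfcont.continuousOn
    intro t ht
    rw [interior_Icc] at ht
    rw [hderiv_eq]
    exact mul_pos (pow_pos (Real.sinh_pos_iff.2 ht.1) k) (hφpos t ht.2)
  have hanti : StrictAntiOn f (Set.Ici C) := by
    apply strictAntiOn_of_deriv_neg (convex_Ici C) hfcont.continuousOn
    intro t ht
    rw [interior_Ici] at ht
    rw [hderiv_eq]
    exact mul_neg_of_pos_of_neg (pow_pos (Real.sinh_pos_iff.2 (hC.trans ht)) k) (hφneg t ht)
  have hf0 : f 0 = 0 := by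
    simp only [hf]
    rw [hk]
    simp [Ifun]
  have hDpos : 0 < f C := by
    have := hmono (Set.left_mem_Icc.2 hC.le) (Set.right_mem_Icc.2 hC.le) hC
    rwa [hf0] at this
  refine ⟨hDpos, ?_⟩
  intro d hd0 hdD
  have hdD' : d < f C := hdD
  -- find b via IVT
  obtain ⟨b, hbmem, hfb⟩ : d ∈ f '' Set.Icc 0 C := by
    apply intermediate_value_Icc hC.le hfcont.continuousOn
    rw [hf0]
    exact ⟨hd0.le, hdD'.le⟩
  have hb0 : 0 < b := by
    rcases hbmem.1.lt_or_eq with h | h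
    · exact h
    · exfalso; rw [← h, hf0] at hfb; linarith
  have hbC : b < C := by
    rcases hbmem.2.lt_or_eq with h | h
    · exact h
    · exfalso; rw [h] at hfb; linarith
  -- large T with f T < d
  set ε : ℝ := -(Real.sinh (C+1) ^ k * φ (C+1)) with hε
  have hεpos : 0 < ε := by
    have h1 : 0 < Real.sinh (C+1) ^ k := pow_pos (Real.sinh_pos_iff.2 (by linarith)) k
    have h2 : φ (C+1) < 0 := hφneg _ (by linarith)
    rw [hε]
    nlinarith
  have hganti : AntitoneOn (fun t => f t + ε * t) (Set.Ici (C+1)) := by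
    apply antitoneOn_of_deriv_nonpos (convex_Ici _)
      (by fun_prop)
      (by apply Differentiable.differentiableOn; fun_prop)
    intro t ht
    rw [interior_Ici] at ht
    have ht' : C + 1 < t := ht
    have hdg : deriv (fun t => f t + ε * t) t = Real.sinh t ^ k * φ t + ε := by
      have := ((hfderiv t).add ((hasDerivAt_id t).const_mul ε))
      have h := this.deriv
      rw [mul_one] at h
      exact h
    rw [hdg]
    have hs1 : Real.sinh (C+1) ^ k ≤ Real.sinh t ^ k :=
      pow_le_pow_left₀ (Real.sinh_nonneg_iff.2 (by linarith)) (Real.sinh_le_sinh.2 ht.le) k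
    have hφt : φ t ≤ 0 := (hφneg t (by linarith)).le
    have hφ2 : φ t ≤ φ (C+1) := (hφanti ht').le
    have hsnn : 0 ≤ Real.sinh (C+1) ^ k := pow_nonneg (Real.sinh_nonneg_iff.2 (by linarith)) k
    have c1 : Real.sinh t ^ k * φ t ≤ Real.sinh (C+1) ^ k * φ t :=
      mul_le_mul_of_nonpos_right hs1 hφt
    have c2 : Real.sinh (C+1) ^ k * φ t ≤ Real.sinh (C+1) ^ k * φ (C+1) :=
      mul_le_mul_of_nonneg_left hφ2 hsnn
    rw [hε]; linarith
  set q : ℝ := max 1 ((f (C+1) - d + 1) / ε) with hq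
  set T : ℝ := C + 1 + q with hT
  have hq1 : (1:ℝ) ≤ q := le_max_left _ _
  have hTmem : T ∈ Set.Ici (C+1) := by simp [hT]; linarith
  have hfT : f T < d := by
    have h1 := hganti (Set.self_mem_Ici) hTmem (by simp [hT]; linarith)
    have h2 : (f (C+1) - d + 1) / ε ≤ q := le_max_right _ _
    have h3 : f (C+1) - d + 1 ≤ q * ε := (div_le_iff₀ hεpos).1 h2
    have h5 : ε * T = ε * (C+1) + ε * q := by rw [hT]; ring
    simp only at h1
    clear_value T q ε
    nlinarith [h1, h3, h5]
  have hCT : C ≤ T := by rw [hT]; linarith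
  obtain ⟨c, hcmem, hfc⟩ : d ∈ f '' Set.Icc C T := by
    apply intermediate_value_Icc' hCT hfcont.continuousOn
    exact ⟨hfT.le, hdD'.le⟩
  have hCc : C < c := by
    rcases hcmem.1.lt_or_eq with h | h
    · exact h
    · exfalso; rw [← h] at hfc; linarith
  have hM : ∀ t, Mfun n H d t = f t - d := fun t => rfl
  refine ⟨b, c, hb0, hbC, hCc, ?_, ?_, ?_⟩
  · intro t ht0 htb
    rw [hM, sub_neg]
    calc f t < f b := hmono ⟨ht0, by linarith⟩ ⟨hb0.le, hbC.le⟩ htb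
    _ = d := hfb
  · intro t hbt htc
    rw [hM]
    rcases le_or_gt t C with h | h
    · have : f b < f t := hmono ⟨hb0.le, hbC.le⟩ ⟨by linarith, h⟩ hbt
      rw [hfb] at this; linarith
    · have : f c < f t := hanti (Set.mem_Ici.2 h.le) (Set.mem_Ici.2 hCc.le) htc
      rw [hfc] at this; linarith
  · intro t hct
    rw [hM, sub_neg]
    calc f t < f c := hanti (Set.mem_Ici.2 hCc.le) (Set.mem_Ici.2 (by linarith)) hct
    _ = d := hfc
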